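/- Let α, β, λ > 0 and let U, V, W be independent real-valued random variables with U ~ Beta(α+λ, β), 1/V ~ Beta(λ, α), and W ~ Beta(α, β). Set W' = U·(V−1)/(V−U). Then the law of the random variable W'/U is not a beta distribution: for every γ, δ > 0, the law of W'/U is different from the measure Beta(γ, δ). -/

import Mathlib

open MeasureTheory ProbabilityTheory
open scoped ENNReal

/-- The Beta(a,b) probability measure on ℝ: supported on (0,1) with density
`x ↦ x^(a-1) * (1-x)^(b-1) * Γ(a+b) / (Γ(a) * Γ(b))`. -/
noncomputable def betaMeasure (a b : ℝ) : Measure ℝ :=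
  volume.withDensity fun x =>
    ENNReal.ofReal ((Set.Ioo (0 : ℝ) 1).indicator
      (fun x => x ^ (a - 1) * (1 - x) ^ (b - 1) * Real.Gamma (a + b) /
        (Real.Gamma a * Real.Gamma b)) x)

section AuxBeta
open Set Real



noncomputable def Jb (a b : ℝ) : ℝ≥0∞ :=
  ∫⁻ x in Set.Ioo (0:ℝ) 1, ENNReal.ofReal (x ^ (a-1) * (1-x) ^ (b-1))

lemma mble_base (p q : ℝ) : Measurable fun x : ℝ => x ^ p * (1-x) ^ q :=
  (measurable_id'.pow_const p).mul ((measurable_const.sub measurable_id').pow_const q)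

lemma cpx_eq {a b : ℝ} {x : ℝ} (hx : x ∈ Set.Ioo (0:ℝ) 1) :
    (x:ℂ) ^ ((a:ℂ)-1) * (1-(x:ℂ)) ^ ((b:ℂ)-1)
      = ((x ^ (a-1) * (1-x) ^ (b-1) : ℝ) : ℂ) := by
  have h1 : (0:ℝ) ≤ x := hx.1.le
  have h2 : (0:ℝ) ≤ 1 - x := by linarith [hx.2]
  rw [Complex.ofReal_mul, Complex.ofReal_cpow h1, Complex.ofReal_cpow h2]
  push_cast
  ring

lemma integrableOn_beta {a b : ℝ} (ha : 0 < a) (hb : 0 < b) :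
    IntegrableOn (fun x : ℝ => x ^ (a-1) * (1-x) ^ (b-1)) (Set.Ioo 0 1) := by
  have h := Complex.betaIntegral_convergent (u := (a:ℂ)) (v := (b:ℂ)) (by simpa) (by simpa)
  have h2 : IntegrableOn (fun x : ℝ => (x:ℂ) ^ ((a:ℂ)-1) * (1-(x:ℂ)) ^ ((b:ℂ)-1))
      (Set.Ioo 0 1) := by
    have := (intervalIntegrable_iff_integrableOn_Ioc_of_le (by norm_num : (0:ℝ) ≤ 1)).mp h
    exact this.mono_set Set.Ioo_subset_Ioc_self
  have h3 : IntegrableOn (fun x : ℝ => ((x ^ (a-1) * (1-x) ^ (b-1) : ℝ) : ℂ))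
      (Set.Ioo 0 1) := by
    apply h2.congr_fun (fun x hx => cpx_eq hx) measurableSet_Ioo
  have h4 := h3.re
  apply h4.congr
  filter_upwards with x
  simp

lemma integral_beta {a b : ℝ} (ha : 0 < a) (hb : 0 < b) :
    ∫ x in Set.Ioo (0:ℝ) 1, x ^ (a-1) * (1-x) ^ (b-1)
      = Real.Gamma a * Real.Gamma b / Real.Gamma (a+b) := by
  have key := Complex.Gamma_mul_Gamma_eq_betaIntegral (s := (a:ℂ)) (t := (b:ℂ))
    (by simpa) (by simpa)
  have hbeta : Complex.betaIntegral (a:ℂ) (b:ℂ)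
      = ((∫ x in Set.Ioo (0:ℝ) 1, x ^ (a-1) * (1-x) ^ (b-1) : ℝ) : ℂ) := by
    rw [Complex.betaIntegral, intervalIntegral.integral_of_le (by norm_num : (0:ℝ) ≤ 1),
      MeasureTheory.integral_Ioc_eq_integral_Ioo]
    rw [setIntegral_congr_fun measurableSet_Ioo (fun x hx => cpx_eq (a := a) (b := b) hx)]
    exact integral_ofReal
  rw [hbeta] at key
  have hcast : ((a:ℂ) + b) = ((a + b : ℝ) : ℂ) := by push_cast; ring
  rw [hcast, Complex.Gamma_ofReal, Complex.Gamma_ofReal, Complex.Gamma_ofReal] at key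
  have key2 : Real.Gamma a * Real.Gamma b
      = Real.Gamma (a+b) * ∫ x in Set.Ioo (0:ℝ) 1, x ^ (a-1) * (1-x) ^ (b-1) := by
    exact_mod_cast key
  have hG : Real.Gamma (a+b) ≠ 0 := (Real.Gamma_pos_of_pos (by linarith)).ne'
  field_simp
  linarith [key2]

lemma Jb_eq {a b : ℝ} (ha : 0 < a) (hb : 0 < b) :
    Jb a b = ENNReal.ofReal (Real.Gamma a * Real.Gamma b / Real.Gamma (a+b)) := by
  rw [Jb, ← integral_beta ha hb, ← ofReal_integral_eq_lintegral_ofReal]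
  · exact integrableOn_beta ha hb
  · filter_upwards [self_mem_ae_restrict (measurableSet_Ioo :
      MeasurableSet (Set.Ioo (0:ℝ) 1))] with x hx
    have h1 : (0:ℝ) ≤ x := hx.1.le
    have h2 : (0:ℝ) ≤ 1 - x := by linarith [hx.2]
    positivity

lemma Bpos {a b : ℝ} (ha : 0 < a) (hb : 0 < b) :
    0 < Real.Gamma a * Real.Gamma b / Real.Gamma (a+b) := by
  have := Real.Gamma_pos_of_pos ha
  have := Real.Gamma_pos_of_pos hb
  have := Real.Gamma_pos_of_pos (show 0 < a + b by linarith)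
  positivity

lemma Jb_ne_top {a b : ℝ} (ha : 0 < a) (hb : 0 < b) : Jb a b ≠ ⊤ := by
  rw [Jb_eq ha hb]; exact ENNReal.ofReal_ne_top

lemma Jb_ne_zero {a b : ℝ} (ha : 0 < a) (hb : 0 < b) : Jb a b ≠ 0 := by
  rw [Jb_eq ha hb]
  simpa using (Bpos ha hb)


lemma Jb_top_left {a b : ℝ} (ha : a ≤ 0) : Jb a b = ⊤ := by
  -- lower bound on Ioo 0 (1/2): integrand ≥ c * x⁻¹ with c > 0
  set c : ℝ := min (((1:ℝ)/2) ^ (b-1)) 1 with hc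
  have hcpos : 0 < c := lt_min (Real.rpow_pos_of_pos (by norm_num) _) one_pos
  have hbound : ∀ x ∈ Set.Ioo (0:ℝ) (1/2), c * x⁻¹ ≤ x ^ (a-1) * (1-x) ^ (b-1) := by
    intro x hx
    obtain ⟨hx0, hx2⟩ := hx
    have hx1 : x < 1 := by linarith
    have h1x : (1:ℝ)/2 ≤ 1 - x := by linarith
    have h1x' : 1 - x ≤ 1 := by linarith
    have hfac : c ≤ (1-x) ^ (b-1) := by
      rcases le_or_gt 0 (b-1) with h | h
      · exact le_trans (min_le_left _ _) (Real.rpow_le_rpow (by norm_num) h1x h)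
      · refine le_trans (min_le_right _ _) ?_
        exact Real.one_le_rpow_of_pos_of_le_one_of_nonpos (by linarith) h1x' h.le
    have hxinv : x⁻¹ ≤ x ^ (a-1) := by
      have : x ^ (-1 : ℝ) ≤ x ^ (a-1) :=
        Real.rpow_le_rpow_of_exponent_ge hx0 hx1.le (by linarith)
      simpa [Real.rpow_neg_one] using this
    calc c * x⁻¹ ≤ (1-x)^(b-1) * x^(a-1) := by
          apply mul_le_mul hfac hxinv (by positivity) (by positivity)
      _ = x ^ (a-1) * (1-x) ^ (b-1) := by ring
  have hsub : Set.Ioo (0:ℝ) (1/2) ⊆ Set.Ioo (0:ℝ) 1 := Set.Ioo_subset_Ioo le_rfl (by norm_num)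
  have hinv_top : ∫⁻ x in Set.Ioo (0:ℝ) (1/2), ENNReal.ofReal (c * x⁻¹) = ⊤ := by
    have hmeas : AEStronglyMeasurable (fun x : ℝ => c * x⁻¹)
        (volume.restrict (Set.Ioo (0:ℝ) (1/2))) :=
      (measurable_const.mul measurable_inv).aestronglyMeasurable
    have hnn : 0 ≤ᵐ[volume.restrict (Set.Ioo (0:ℝ) (1/2))] fun x : ℝ => c * x⁻¹ := by
      filter_upwards [self_mem_ae_restrict (measurableSet_Ioo :
        MeasurableSet (Set.Ioo (0:ℝ) (1/2)))] with x hx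
      have := hx.1
      positivity
    by_contra h
    have hint := (lintegral_ofReal_ne_top_iff_integrable hmeas hnn).mp h
    have hint2 : IntegrableOn (fun x : ℝ => x⁻¹) (Set.Ioo (0:ℝ) (1/2)) := by
      have := hint.const_mul c⁻¹
      apply this.congr
      filter_upwards with x
      field_simp
    have : IntegrableOn (fun x : ℝ => x ^ (-1:ℝ)) (Set.Ioo (0:ℝ) (1/2)) := by
      apply hint2.congr
      filter_upwards [self_mem_ae_restrict (measurableSet_Ioo :
        MeasurableSet (Set.Ioo (0:ℝ) (1/2)))] with x hx
      rw [Real.rpow_neg_one]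
    rw [intervalIntegral.integrableOn_Ioo_rpow_iff (by norm_num)] at this
    linarith
  refine top_unique ?_
  calc (⊤ : ℝ≥0∞) = ∫⁻ x in Set.Ioo (0:ℝ) (1/2), ENNReal.ofReal (c * x⁻¹) := hinv_top.symm
    _ ≤ ∫⁻ x in Set.Ioo (0:ℝ) (1/2), ENNReal.ofReal (x ^ (a-1) * (1-x) ^ (b-1)) := by
        apply setLIntegral_mono' measurableSet_Ioo
        intro x hx
        exact ENNReal.ofReal_le_ofReal (hbound x hx)
    _ ≤ Jb a b := lintegral_mono_set hsub

lemma Jb_symm (a b : ℝ) : Jb a b = Jb b a := by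
  have hmp : MeasurePreserving (fun x : ℝ => 1 - x) volume volume := by
    have h1 : MeasurePreserving (fun x : ℝ => -x) volume volume :=
      Measure.measurePreserving_neg _
    have h2 : MeasurePreserving (fun x : ℝ => 1 + x) volume volume :=
      measurePreserving_add_left volume 1
    have := h2.comp h1
    simpa [Function.comp_def, sub_eq_add_neg] using this
  have hpre : (fun x : ℝ => 1 - x) ⁻¹' (Set.Ioo (0:ℝ) 1) = Set.Ioo (0:ℝ) 1 := by
    ext x
    simp only [Set.mem_preimage, Set.mem_Ioo]
    constructor <;> rintro ⟨h1, h2⟩ <;> constructor <;> linarith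
  have key := hmp.setLIntegral_comp_preimage (s := Set.Ioo (0:ℝ) 1)
    measurableSet_Ioo (f := fun x => ENNReal.ofReal (x ^ (b-1) * (1-x) ^ (a-1)))
    ((mble_base _ _).ennreal_ofReal)
  rw [hpre] at key
  rw [Jb, Jb, ← key]
  apply setLIntegral_congr_fun measurableSet_Ioo
  intro x hx
  norm_num [mul_comm]

lemma Jb_top_right {a b : ℝ} (hb : b ≤ 0) : Jb a b = ⊤ := by
  rw [Jb_symm]; exact Jb_top_left hb

lemma Jb_ne_zero' (a b : ℝ) : Jb a b ≠ 0 := by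
  rcases le_or_gt a 0 with h | h
  · rw [Jb_top_left h]; simp
  rcases le_or_gt b 0 with h' | h'
  · rw [Jb_top_right h']; simp
  exact Jb_ne_zero h h'

lemma Gamma_strict {d e s : ℝ} (hd : 0 < d) (he : 0 < e) (hs : 0 < s) :
    Real.Gamma (d+s) * Real.Gamma (d+e) < Real.Gamma d * Real.Gamma (d+e+s) := by
  have I1 := integral_beta (a := d+s) (b := e) (by linarith) he
  have I0 := integral_beta (a := d) (b := e) hd he
  have hint1 := integrableOn_beta (a := d+s) (b := e) (by linarith) he
  have hint0 := integrableOn_beta (a := d) (b := e) hd he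
  have hdiff : 0 < ∫ x in Set.Ioo (0:ℝ) 1,
      (x ^ (d-1) * (1-x)^(e-1) - x ^ (d+s-1) * (1-x)^(e-1)) := by
    rw [setIntegral_pos_iff_support_of_nonneg_ae]
    · have hss : Set.Ioo (0:ℝ) 1 ⊆ Function.support
          (fun x => x ^ (d-1) * (1-x)^(e-1) - x ^ (d+s-1) * (1-x)^(e-1))
          ∩ Set.Ioo (0:ℝ) 1 := by
        intro x hx
        refine ⟨?_, hx⟩
        have h1 : x ^ (d+s-1) < x ^ (d-1) :=
          Real.rpow_lt_rpow_of_exponent_gt hx.1 hx.2 (by linarith)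
        have h2 : 0 < (1-x)^(e-1) := Real.rpow_pos_of_pos (by linarith [hx.2]) _
        have h3 : 0 < x ^ (d-1) * (1-x)^(e-1) - x ^ (d+s-1)*(1-x)^(e-1) := by nlinarith
        exact h3.ne'
      calc (0:ℝ≥0∞) < volume (Set.Ioo (0:ℝ) 1) := by simp
        _ ≤ _ := measure_mono hss
    · filter_upwards [self_mem_ae_restrict (measurableSet_Ioo :
        MeasurableSet (Set.Ioo (0:ℝ) 1))] with x hx
      have h1 : x ^ (d+s-1) ≤ x ^ (d-1) :=
        (Real.rpow_lt_rpow_of_exponent_gt hx.1 hx.2 (by linarith)).le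
      have h2 : 0 ≤ (1-x)^(e-1) := (Real.rpow_pos_of_pos (by linarith [hx.2]) _).le
      have := hx.1
      simp only [Pi.zero_apply]
      nlinarith
    · exact hint0.sub hint1
  have hsub := integral_sub hint0 hint1
  have hlt : Real.Gamma (d+s) * Real.Gamma e / Real.Gamma (d+s+e)
      < Real.Gamma d * Real.Gamma e / Real.Gamma (d+e) := by
    rw [← I1, ← I0]
    have : ∫ x in Set.Ioo (0:ℝ) 1,
        (x ^ (d-1) * (1-x)^(e-1) - x ^ (d+s-1) * (1-x)^(e-1))
        = (∫ x in Set.Ioo (0:ℝ) 1, x ^ (d-1) * (1-x)^(e-1))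
          - ∫ x in Set.Ioo (0:ℝ) 1, x ^ (d+s-1) * (1-x)^(e-1) := hsub
    linarith [hdiff, this]
  have hGe : 0 < Real.Gamma e := Real.Gamma_pos_of_pos he
  have hG1 : 0 < Real.Gamma (d+s+e) := Real.Gamma_pos_of_pos (by linarith)
  have hG2 : 0 < Real.Gamma (d+e) := Real.Gamma_pos_of_pos (by linarith)
  have heq : d + e + s = d + s + e := by ring
  rw [heq]
  have hmul := (div_lt_div_iff₀ hG1 hG2).mp hlt
  have key : Real.Gamma (d+s) * Real.Gamma (d+e) * Real.Gamma e
      < Real.Gamma d * Real.Gamma (d+s+e) * Real.Gamma e := by nlinarith [hmul]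
  exact lt_of_mul_lt_mul_right key hGe.le

lemma mble_density (a b : ℝ) : Measurable fun x : ℝ =>
    ENNReal.ofReal ((Set.Ioo (0 : ℝ) 1).indicator
      (fun x => x ^ (a - 1) * (1 - x) ^ (b - 1) * Real.Gamma (a + b) /
        (Real.Gamma a * Real.Gamma b)) x) :=
  ((((mble_base (a-1) (b-1)).mul_const _).div_const _).indicator
    measurableSet_Ioo).ennreal_ofReal

lemma betaMeasure_ae (a b : ℝ) : ∀ᵐ x ∂(_root_.betaMeasure a b), x ∈ Set.Ioo (0:ℝ) 1 := by
  rw [ae_iff]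
  have hmeas : MeasurableSet {x : ℝ | ¬ x ∈ Set.Ioo (0:ℝ) 1} :=
    (measurableSet_Ioo (a := (0:ℝ)) (b := 1)).compl
  rw [_root_.betaMeasure, withDensity_apply _ hmeas]
  rw [setLIntegral_congr_fun hmeas (g := fun _ => 0) ?_, lintegral_zero]
  intro x hx
  beta_reduce
  rw [Set.indicator_of_notMem hx]
  simp

lemma lintegral_betaMeasure (a b : ℝ) {g : ℝ → ℝ≥0∞} (hg : Measurable g) :
    ∫⁻ x, g x ∂(_root_.betaMeasure a b)
      = ∫⁻ x in Set.Ioo (0:ℝ) 1, g x * ENNReal.ofReal (x ^ (a-1) * (1-x) ^ (b-1)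
          * (Real.Gamma (a+b) / (Real.Gamma a * Real.Gamma b))) := by
  rw [_root_.betaMeasure, lintegral_withDensity_eq_lintegral_mul _ (mble_density a b) hg]
  have hpt : ∀ x : ℝ, ((fun x => ENNReal.ofReal ((Set.Ioo (0:ℝ) 1).indicator
        (fun x => x ^ (a - 1) * (1 - x) ^ (b - 1) * Real.Gamma (a + b) /
          (Real.Gamma a * Real.Gamma b)) x)) * g) x
      = (Set.Ioo (0:ℝ) 1).indicator (fun x => g x * ENNReal.ofReal (x ^ (a-1) * (1-x) ^ (b-1)
          * (Real.Gamma (a+b) / (Real.Gamma a * Real.Gamma b)))) x := by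
    intro x
    by_cases hx : x ∈ Set.Ioo (0:ℝ) 1
    · rw [Set.indicator_of_mem hx]
      simp only [Pi.mul_apply, Set.indicator_of_mem hx]
      rw [mul_comm]
      congr 2
      ring
    · simp only [Pi.mul_apply, Set.indicator_of_notMem hx]
      simp
  rw [lintegral_congr hpt, lintegral_indicator measurableSet_Ioo _]

lemma lintegral_pow_betaMeasure {a b : ℝ} (ha : 0 < a) (hb : 0 < b) (p q : ℝ) :
    ∫⁻ x, ENNReal.ofReal (x ^ p * (1-x) ^ q) ∂(_root_.betaMeasure a b)
      = ENNReal.ofReal (Real.Gamma (a+b) / (Real.Gamma a * Real.Gamma b))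
          * Jb (a+p) (b+q) := by
  have hK : (0:ℝ) ≤ Real.Gamma (a+b) / (Real.Gamma a * Real.Gamma b) := by
    have := Real.Gamma_pos_of_pos ha
    have := Real.Gamma_pos_of_pos hb
    have := Real.Gamma_pos_of_pos (show 0 < a + b by linarith)
    positivity
  rw [lintegral_betaMeasure a b (mble_base p q).ennreal_ofReal]
  rw [setLIntegral_congr_fun measurableSet_Ioo
    (g := fun x => ENNReal.ofReal (Real.Gamma (a+b) / (Real.Gamma a * Real.Gamma b))
      * ENNReal.ofReal (x ^ (a+p-1) * (1-x) ^ (b+q-1))) ?_]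
  · rw [lintegral_const_mul _ ((mble_base _ _).ennreal_ofReal), Jb]
  · intro x hx
    have hx0 : 0 < x := hx.1
    have hx1 : 0 < 1 - x := by linarith [hx.2]
    beta_reduce
    rw [← ENNReal.ofReal_mul (by positivity), ← ENNReal.ofReal_mul hK]
    congr 1
    have e1 : x ^ p * x ^ (a-1) = x ^ (a+p-1) := by
      rw [← Real.rpow_add hx0]; congr 1; ring
    have e2 : (1-x) ^ q * (1-x) ^ (b-1) = (1-x) ^ (b+q-1) := by
      rw [← Real.rpow_add hx1]; congr 1; ring
    calc x ^ p * (1-x) ^ q * (x ^ (a-1) * (1-x) ^ (b-1)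
          * (Real.Gamma (a+b) / (Real.Gamma a * Real.Gamma b)))
        = (Real.Gamma (a+b) / (Real.Gamma a * Real.Gamma b))
            * ((x ^ p * x ^ (a-1)) * ((1-x) ^ q * (1-x) ^ (b-1))) := by ring
      _ = _ := by rw [e1, e2]

lemma mom_main {a b : ℝ} (ha : 0 < a) (hb : 0 < b) (s : ℝ) :
    ∫⁻ x, (ENNReal.ofReal ((1-x)/x)) ^ s ∂(_root_.betaMeasure a b)
      = ENNReal.ofReal (Real.Gamma (a+b) / (Real.Gamma a * Real.Gamma b))
          * Jb (a-s) (b+s) := by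
  have h1 : ∫⁻ x, (ENNReal.ofReal ((1-x)/x)) ^ s ∂(_root_.betaMeasure a b)
      = ∫⁻ x, ENNReal.ofReal (x ^ (-s) * (1-x) ^ s) ∂(_root_.betaMeasure a b) := by
    apply lintegral_congr_ae
    filter_upwards [betaMeasure_ae a b] with x hx
    have hx0 : 0 < x := hx.1
    have hx1 : 0 < 1 - x := by linarith [hx.2]
    rw [ENNReal.ofReal_rpow_of_pos (by positivity)]
    congr 1
    rw [Real.div_rpow hx1.le hx0.le, Real.rpow_neg hx0.le]
    ring
  rw [h1, lintegral_pow_betaMeasure ha hb (-s) s]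
  congr 2 <;> ring

lemma mom_one {a b : ℝ} (ha : 0 < a) (hb : 0 < b) (s : ℝ) :
    ∫⁻ x, (ENNReal.ofReal (1-x)) ^ s ∂(_root_.betaMeasure a b)
      = ENNReal.ofReal (Real.Gamma (a+b) / (Real.Gamma a * Real.Gamma b))
          * Jb a (b+s) := by
  have h1 : ∫⁻ x, (ENNReal.ofReal (1-x)) ^ s ∂(_root_.betaMeasure a b)
      = ∫⁻ x, ENNReal.ofReal (x ^ (0:ℝ) * (1-x) ^ s) ∂(_root_.betaMeasure a b) := by
    apply lintegral_congr_ae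
    filter_upwards [betaMeasure_ae a b] with x hx
    have hx1 : 0 < 1 - x := by linarith [hx.2]
    rw [ENNReal.ofReal_rpow_of_pos (by positivity), Real.rpow_zero, one_mul]
  rw [h1, lintegral_pow_betaMeasure ha hb 0 s]
  congr 2 <;> ring

lemma mom_ratio {a b : ℝ} (ha : 0 < a) (hb : 0 < b) (s : ℝ) :
    ∫⁻ x, (ENNReal.ofReal (x/(1-x))) ^ s ∂(_root_.betaMeasure a b)
      = ENNReal.ofReal (Real.Gamma (a+b) / (Real.Gamma a * Real.Gamma b))
          * Jb (a+s) (b-s) := by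
  have h1 : ∫⁻ x, (ENNReal.ofReal (x/(1-x))) ^ s ∂(_root_.betaMeasure a b)
      = ∫⁻ x, ENNReal.ofReal (x ^ s * (1-x) ^ (-s)) ∂(_root_.betaMeasure a b) := by
    apply lintegral_congr_ae
    filter_upwards [betaMeasure_ae a b] with x hx
    have hx0 : 0 < x := hx.1
    have hx1 : 0 < 1 - x := by linarith [hx.2]
    rw [ENNReal.ofReal_rpow_of_pos (by positivity)]
    congr 1
    rw [Real.div_rpow hx0.le hx1.le, Real.rpow_neg hx1.le]
    ring
  rw [h1, lintegral_pow_betaMeasure ha hb s (-s)]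
  congr 2 <;> ring

end AuxBeta

/-- Proposition `pr:hypgeom`: if `U ~ Beta(α+λ, β)`, `1/V ~ Beta(λ, α)`, `W ~ Beta(α, β)`
are independent and `W' = U·(V−1)/(V−U)`, then the law of `W'/U` is not a beta
distribution. -/

theorem doob_transition_not_beta_distributed
    {Ω : Type*} [MeasurableSpace Ω] (μ : Measure Ω) [IsProbabilityMeasure μ]
    (α β lam : ℝ) (hα : 0 < α) (hβ : 0 < β) (hlam : 0 < lam)
    (U V W : Ω → ℝ) (hU : Measurable U) (hV : Measurable V) (hW : Measurable W)
    (hindep : iIndepFun ![U, V, W] μ)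
    (hUlaw : μ.map U = _root_.betaMeasure (α + lam) β)
    (hVlaw : μ.map (fun ω => (V ω)⁻¹) = _root_.betaMeasure lam α)
    (hWlaw : μ.map W = _root_.betaMeasure α β) :
    ∀ γ δ : ℝ, 0 < γ → 0 < δ →
      μ.map (fun ω => (U ω * (V ω - 1) / (V ω - U ω)) / U ω) ≠ _root_.betaMeasure γ δ := by
  intro γ δ hγ hδ hmap
  have gp : ∀ x : ℝ, 0 < x → 0 < Real.Gamma x := fun _ h => Real.Gamma_pos_of_pos h
  set Z : Ω → ℝ := fun ω => (U ω * (V ω - 1) / (V ω - U ω)) / U ω with hZdef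
  have mZ : Measurable Z := ((hU.mul (hV.sub measurable_const)).div (hV.sub hU)).div hU
  have hUae : ∀ᵐ ω ∂μ, U ω ∈ Set.Ioo (0:ℝ) 1 := by
    have h := betaMeasure_ae (α + lam) β
    rw [← hUlaw] at h
    exact (MeasureTheory.ae_map_iff hU.aemeasurable measurableSet_Ioo).mp h
  have hVae : ∀ᵐ ω ∂μ, (V ω)⁻¹ ∈ Set.Ioo (0:ℝ) 1 := by
    have h := betaMeasure_ae lam α
    rw [← hVlaw] at h
    exact (MeasureTheory.ae_map_iff (hV.inv).aemeasurable measurableSet_Ioo).mp h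
  have hVU : IndepFun V U μ := by
    have h := hindep.indepFun (show (1 : Fin 3) ≠ (0 : Fin 3) by decide)
    simpa using h
  have hK1 : 0 < Real.Gamma (lam+α) / (Real.Gamma lam * Real.Gamma α) :=
    div_pos (gp _ (by linarith)) (mul_pos (gp _ hlam) (gp _ hα))
  have hK2 : 0 < Real.Gamma (α+lam+β) / (Real.Gamma (α+lam) * Real.Gamma β) :=
    div_pos (gp _ (by linarith)) (mul_pos (gp _ (by linarith)) (gp _ hβ))
  have hK3 : 0 < Real.Gamma (γ+δ) / (Real.Gamma γ * Real.Gamma δ) :=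
    div_pos (gp _ (by linarith)) (mul_pos (gp _ hγ) (gp _ hδ))
  have ofK1ne : ENNReal.ofReal (Real.Gamma (lam+α) / (Real.Gamma lam * Real.Gamma α)) ≠ 0 :=
    (ENNReal.ofReal_pos.mpr hK1).ne'
  have ofK2ne : ENNReal.ofReal (Real.Gamma (α+lam+β) / (Real.Gamma (α+lam) * Real.Gamma β)) ≠ 0 :=
    (ENNReal.ofReal_pos.mpr hK2).ne'
  have ofK3ne : ENNReal.ofReal (Real.Gamma (γ+δ) / (Real.Gamma γ * Real.Gamma δ)) ≠ 0 :=
    (ENNReal.ofReal_pos.mpr hK3).ne'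
  have key : ∀ s : ℝ,
      (ENNReal.ofReal (Real.Gamma (lam+α) / (Real.Gamma lam * Real.Gamma α)) * Jb (lam+s) (α-s))
        * (ENNReal.ofReal (Real.Gamma (α+lam+β) / (Real.Gamma (α+lam) * Real.Gamma β))
            * Jb (α+lam) (β+s))
        = ENNReal.ofReal (Real.Gamma (γ+δ) / (Real.Gamma γ * Real.Gamma δ))
            * Jb (γ-s) (δ+s) := by
    intro s
    have mrp : Measurable fun y : ℝ≥0∞ => y ^ s := ENNReal.continuous_rpow_const.measurable
    have mh1 : Measurable fun x : ℝ => (ENNReal.ofReal (1 - x)) ^ s :=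
      mrp.comp (measurable_const.sub measurable_id').ennreal_ofReal
    have mh2 : Measurable fun x : ℝ => (ENNReal.ofReal (x / (1 - x))) ^ s :=
      mrp.comp ((measurable_id'.div (measurable_const.sub measurable_id')).ennreal_ofReal)
    have mphi : Measurable fun x : ℝ => (ENNReal.ofReal (x⁻¹ / (1 - x⁻¹))) ^ s :=
      mrp.comp ((measurable_inv.div (measurable_const.sub measurable_inv)).ennreal_ofReal)
    have mG : Measurable fun x : ℝ => (ENNReal.ofReal ((1 - x) / x)) ^ s :=
      mrp.comp (((measurable_const.sub measurable_id').div measurable_id').ennreal_ofReal)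
    have stepA : ∫⁻ x, (ENNReal.ofReal ((1 - x) / x)) ^ s ∂(_root_.betaMeasure γ δ)
        = ∫⁻ ω, ((ENNReal.ofReal ((V ω)⁻¹ / (1 - (V ω)⁻¹))) ^ s)
            * ((ENNReal.ofReal (1 - U ω)) ^ s) ∂μ := by
      rw [← hmap, lintegral_map mG mZ]
      apply lintegral_congr_ae
      filter_upwards [hUae, hVae] with ω hu hv
      obtain ⟨hu0, hu1⟩ := hu
      obtain ⟨hv0, hv1⟩ := hv
      have hV0 : 0 < V ω := inv_pos.mp hv0
      have hinv : (V ω)⁻¹ * V ω = 1 := inv_mul_cancel₀ hV0.ne'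
      have hV1 : 1 < V ω := by nlinarith
      have hVU0 : (0:ℝ) < V ω - U ω := by linarith
      have hZω : Z ω = (V ω - 1) / (V ω - U ω) := by
        simp only [hZdef]
        field_simp
      have h4 : (0:ℝ) < 1 - (V ω)⁻¹ := by linarith
      have halg : (1 - Z ω) / Z ω = (1 - U ω) * ((V ω)⁻¹ / (1 - (V ω)⁻¹)) := by
        rw [hZω]
        have h1 : V ω - 1 ≠ 0 := by linarith
        have h2 : V ω - U ω ≠ 0 := hVU0.ne'
        have h3 : V ω ≠ 0 := hV0.ne'
        field_simp
        ring
      show (ENNReal.ofReal ((1 - Z ω) / Z ω)) ^ s = _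
      rw [halg, ENNReal.ofReal_mul (by linarith : (0:ℝ) ≤ 1 - U ω),
        ENNReal.mul_rpow_of_ne_top ENNReal.ofReal_ne_top ENNReal.ofReal_ne_top]
      ring
    have hind : IndepFun (fun ω => (ENNReal.ofReal ((V ω)⁻¹ / (1 - (V ω)⁻¹))) ^ s)
        (fun ω => (ENNReal.ofReal (1 - U ω)) ^ s) μ := hVU.comp mphi mh1
    have stepB : ∫⁻ ω, ((ENNReal.ofReal ((V ω)⁻¹ / (1 - (V ω)⁻¹))) ^ s)
          * ((ENNReal.ofReal (1 - U ω)) ^ s) ∂μ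
        = (∫⁻ ω, (ENNReal.ofReal ((V ω)⁻¹ / (1 - (V ω)⁻¹))) ^ s ∂μ)
          * ∫⁻ ω, (ENNReal.ofReal (1 - U ω)) ^ s ∂μ :=
      lintegral_mul_eq_lintegral_mul_lintegral_of_indepFun (mphi.comp hV) (mh1.comp hU) hind
    have stepC : ∫⁻ ω, (ENNReal.ofReal ((V ω)⁻¹ / (1 - (V ω)⁻¹))) ^ s ∂μ
        = ENNReal.ofReal (Real.Gamma (lam+α) / (Real.Gamma lam * Real.Gamma α))
            * Jb (lam+s) (α-s) := by
      have e := lintegral_map (μ := μ) (f := fun x : ℝ => (ENNReal.ofReal (x / (1 - x))) ^ s)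
        (g := fun ω => (V ω)⁻¹) mh2 hV.inv
      rw [hVlaw, mom_ratio hlam hα s] at e
      exact e.symm
    have stepD : ∫⁻ ω, (ENNReal.ofReal (1 - U ω)) ^ s ∂μ
        = ENNReal.ofReal (Real.Gamma (α+lam+β) / (Real.Gamma (α+lam) * Real.Gamma β))
            * Jb (α+lam) (β+s) := by
      have e := lintegral_map (μ := μ) (f := fun x : ℝ => (ENNReal.ofReal (1 - x)) ^ s)
        (g := U) mh1 hU
      rw [hUlaw, mom_one (show (0:ℝ) < α + lam by linarith) hβ s] at e
      exact e.symm
    rw [← stepC, ← stepD, ← stepB, ← stepA]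
    exact mom_main hγ hδ s
  clear hmap
  -- Step 1: γ = α
  have hγα : γ = α := by
    by_contra hne
    rcases lt_or_gt_of_ne hne with h | h
    · have hks := key ((γ + α)/2)
      rw [Jb_top_left (by linarith : γ - (γ+α)/2 ≤ 0), ENNReal.mul_top ofK3ne] at hks
      exact (ENNReal.mul_ne_top
        (ENNReal.mul_ne_top ENNReal.ofReal_ne_top (Jb_ne_top (by linarith) (by linarith)))
        (ENNReal.mul_ne_top ENNReal.ofReal_ne_top (Jb_ne_top (by linarith) (by linarith)))) hks
    · have hks := key ((α + γ)/2)
      rw [Jb_top_right (by linarith : α - (α+γ)/2 ≤ 0), ENNReal.mul_top ofK1ne,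
        ENNReal.top_mul (mul_ne_zero ofK2ne (Jb_ne_zero' _ _))] at hks
      exact (ENNReal.mul_ne_top ENNReal.ofReal_ne_top
        (Jb_ne_top (by linarith) (by linarith))) hks.symm
  rw [hγα] at key ofK3ne
  -- Step 2: δ = lam or δ = β
  have hm0 : 0 < min lam β := lt_min hlam hβ
  have hmlam := min_le_left lam β
  have hmb := min_le_right lam β
  have hδm : δ = lam ∨ δ = β := by
    rcases lt_trichotomy δ (min lam β) with h | h | h
    · exfalso
      have hks := key (-(δ + min lam β)/2)
      rw [Jb_top_right (by linarith : δ + -(δ + min lam β)/2 ≤ 0),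
        ENNReal.mul_top ofK3ne] at hks
      exact (ENNReal.mul_ne_top
        (ENNReal.mul_ne_top ENNReal.ofReal_ne_top (Jb_ne_top (by linarith) (by linarith)))
        (ENNReal.mul_ne_top ENNReal.ofReal_ne_top (Jb_ne_top (by linarith) (by linarith)))) hks
    · rcases min_cases lam β with ⟨he, _⟩ | ⟨he, _⟩
      · exact Or.inl (by rw [h, he])
      · exact Or.inr (by rw [h, he])
    · exfalso
      rcases min_cases lam β with ⟨he, _⟩ | ⟨he, _⟩ <;> rw [he] at h
      · have hks := key (-(lam + δ)/2)
        rw [Jb_top_left (by linarith : lam + -(lam + δ)/2 ≤ 0), ENNReal.mul_top ofK1ne,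
          ENNReal.top_mul (mul_ne_zero ofK2ne (Jb_ne_zero' _ _))] at hks
        exact (ENNReal.mul_ne_top ENNReal.ofReal_ne_top
          (Jb_ne_top (by linarith) (by linarith))) hks.symm
      · have hks := key (-(β + δ)/2)
        rw [Jb_top_right (by linarith : β + -(β + δ)/2 ≤ 0), ENNReal.mul_top ofK2ne,
          ENNReal.mul_top (mul_ne_zero ofK1ne (Jb_ne_zero' _ _))] at hks
        exact (ENNReal.mul_ne_top ENNReal.ofReal_ne_top
          (Jb_ne_top (by linarith) (by linarith))) hks.symm
  -- Step 3: contradiction at s = α/2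
  have hg1 : 0 < Real.Gamma (lam + α/2) := gp _ (by linarith)
  have hg2 : 0 < Real.Gamma (α - α/2) := gp _ (by linarith)
  have hg3 : 0 < Real.Gamma (α + lam) := gp _ (by linarith)
  have hg4 : 0 < Real.Gamma (β + α/2) := gp _ (by linarith)
  have hg5 : 0 < Real.Gamma (α + lam + β + α/2) := gp _ (by linarith)
  have hg6 : 0 < Real.Gamma (α + lam + β) := gp _ (by linarith)
  have hgl : 0 < Real.Gamma lam := gp _ hlam
  have hga : 0 < Real.Gamma α := gp _ hα
  have hgb : 0 < Real.Gamma β := gp _ hβ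
  rcases hδm with hδe | hδe
  · -- δ = lam
    rw [hδe] at key
    have hks := key (α/2)
    rw [Jb_eq (a := lam + α/2) (b := α - α/2) (by linarith) (by linarith),
        Jb_eq (a := α + lam) (b := β + α/2) (by linarith) (by linarith),
        Jb_eq (a := α - α/2) (b := lam + α/2) (by linarith) (by linarith)] at hks
    rw [show lam + α/2 + (α - α/2) = α + lam from by ring,
        show α + lam + (β + α/2) = α + lam + β + α/2 from by ring,
        show α - α/2 + (lam + α/2) = α + lam from by ring,
        show lam + α = α + lam from by ring] at hks
    have hK1' : 0 < Real.Gamma (α+lam) / (Real.Gamma lam * Real.Gamma α) :=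
      div_pos hg3 (mul_pos hgl hga)
    have hK3' : 0 < Real.Gamma (α+lam) / (Real.Gamma α * Real.Gamma lam) :=
      div_pos hg3 (mul_pos hga hgl)
    have hB1 : 0 ≤ Real.Gamma (lam + α/2) * Real.Gamma (α - α/2) / Real.Gamma (α + lam) :=
      (div_pos (mul_pos hg1 hg2) hg3).le
    have hB2 : 0 ≤ Real.Gamma (α + lam) * Real.Gamma (β + α/2) / Real.Gamma (α + lam + β + α/2) :=
      (div_pos (mul_pos hg3 hg4) hg5).le
    rw [← ENNReal.ofReal_mul hK1'.le, ← ENNReal.ofReal_mul hK2.le,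
        ← ENNReal.ofReal_mul hK3'.le,
        ← ENNReal.ofReal_mul (mul_nonneg hK1'.le hB1)] at hks
    have hreal := (ENNReal.ofReal_eq_ofReal_iff
      (by positivity) (by positivity)).mp hks
    set X := Real.Gamma (lam + α/2) with hX
    set Y := Real.Gamma (α - α/2) with hY
    set P := Real.Gamma (α + lam) with hP
    set Q := Real.Gamma (α + lam + β) with hQ
    set R := Real.Gamma (β + α/2) with hR
    set S := Real.Gamma (α + lam + β + α/2) with hS
    set A := Real.Gamma α with hA
    set L := Real.Gamma lam with hL
    set B := Real.Gamma β with hB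
    have hXne : X ≠ 0 := hg1.ne'
    have hYne : Y ≠ 0 := hg2.ne'
    have hPne : P ≠ 0 := hg3.ne'
    have hRne : R ≠ 0 := hg4.ne'
    have hSne : S ≠ 0 := hg5.ne'
    have hQne : Q ≠ 0 := hg6.ne'
    have hAne : A ≠ 0 := hga.ne'
    have hLne : L ≠ 0 := hgl.ne'
    have hBne : B ≠ 0 := hgb.ne'
    field_simp at hreal
    have E2 : R * Q = B * S := by
      have hF : P*P*P*X*Y*A*L ≠ 0 := by
        exact (mul_pos (mul_pos (mul_pos (mul_pos (mul_pos (mul_pos hg3 hg3) hg3) hg1) hg2) hga) hgl).ne'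
      apply mul_left_cancel₀ hF
      linear_combination (P*P*P*X*Y*A*L) * hreal
    have hstrict := Gamma_strict hβ (show (0:ℝ) < α + lam by linarith) (show (0:ℝ) < α/2 by linarith)
    rw [show β + (α + lam) = α + lam + β from by ring,
        ← hR, ← hQ, ← hB, ← hS] at hstrict
    linarith [E2, hstrict]
  · -- δ = β
    rw [hδe] at key
    have hks := key (α/2)
    rw [Jb_eq (a := lam + α/2) (b := α - α/2) (by linarith) (by linarith),
        Jb_eq (a := α + lam) (b := β + α/2) (by linarith) (by linarith),
        Jb_eq (a := α - α/2) (b := β + α/2) (by linarith) (by linarith)] at hks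
    rw [show lam + α/2 + (α - α/2) = α + lam from by ring,
        show α + lam + (β + α/2) = α + lam + β + α/2 from by ring,
        show α - α/2 + (β + α/2) = α + β from by ring,
        show lam + α = α + lam from by ring] at hks
    have hgc : 0 < Real.Gamma (α + β) := gp _ (by linarith)
    have hK1' : 0 < Real.Gamma (α+lam) / (Real.Gamma lam * Real.Gamma α) :=
      div_pos hg3 (mul_pos hgl hga)
    have hK3' : 0 < Real.Gamma (α+β) / (Real.Gamma α * Real.Gamma β) :=
      div_pos hgc (mul_pos hga hgb)
    have hB1 : 0 ≤ Real.Gamma (lam + α/2) * Real.Gamma (α - α/2) / Real.Gamma (α + lam) :=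
      (div_pos (mul_pos hg1 hg2) hg3).le
    rw [← ENNReal.ofReal_mul hK1'.le, ← ENNReal.ofReal_mul hK2.le,
        ← ENNReal.ofReal_mul hK3'.le,
        ← ENNReal.ofReal_mul (mul_nonneg hK1'.le hB1)] at hks
    have hreal := (ENNReal.ofReal_eq_ofReal_iff
      (by positivity) (by positivity)).mp hks
    set X := Real.Gamma (lam + α/2) with hX
    set Y := Real.Gamma (α - α/2) with hY
    set P := Real.Gamma (α + lam) with hP
    set Q := Real.Gamma (α + lam + β) with hQ
    set R := Real.Gamma (β + α/2) with hR
    set S := Real.Gamma (α + lam + β + α/2) with hS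
    set C := Real.Gamma (α + β) with hC
    set A := Real.Gamma α with hA
    set L := Real.Gamma lam with hL
    set B := Real.Gamma β with hB
    have hXne : X ≠ 0 := hg1.ne'
    have hYne : Y ≠ 0 := hg2.ne'
    have hPne : P ≠ 0 := hg3.ne'
    have hRne : R ≠ 0 := hg4.ne'
    have hSne : S ≠ 0 := hg5.ne'
    have hQne : Q ≠ 0 := hg6.ne'
    have hAne : A ≠ 0 := hga.ne'
    have hLne : L ≠ 0 := hgl.ne'
    have hBne : B ≠ 0 := hgb.ne'
    have hCne : C ≠ 0 := hgc.ne'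
    field_simp at hreal
    have E3 : X * Q = L * S := by
      have hF : P*P*Y*R*A*B*C ≠ 0 := by
        exact (mul_pos (mul_pos (mul_pos (mul_pos (mul_pos (mul_pos hg3 hg3) hg2) hg4) hga) hgb) hgc).ne'
      apply mul_left_cancel₀ hF
      linear_combination (P*P*Y*R*A*B*C) * hreal
    have hstrict := Gamma_strict hlam (show (0:ℝ) < α + β by linarith) (show (0:ℝ) < α/2 by linarith)
    rw [show lam + (α + β) = α + lam + β from by ring,
        ← hX, ← hQ, ← hL, ← hS] at hstrict
    linarith [E3, hstrict]
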